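/- Let P be a reduced word poset for w ∈ W and let λ_P : R(w) → N+ be defined by λ_P(r) = dp(φ_P^{-1}(r)), where dp is the depth function of P. Then for every k ∈ N+, the elements of P_k = φ_P^{-1}(λ_P^{-1}({k})) are pairwise incomparable in P, their labels are pairwise distinct and pairwise commuting; in particular s(P_k) is an independent subset of S with |s(P_k)| = |P_k|. -/

import Mathlib

def WStep {S : Type*} (comm : S → S → Prop) (w : List S) (i j : Fin w.length) : Prop :=
  i ≤ j ∧ (w.get i = w.get j ∨ ¬ comm (w.get i) (w.get j))

/-- The word-poset order `≤_w` on positions of `w`. -/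
def WLe {S : Type*} (comm : S → S → Prop) (w : List S) : Fin w.length → Fin w.length → Prop :=
  Relation.TransGen (WStep comm w)

/-- The depth of `u`: the greatest length of a strictly increasing chain ending at `u`. -/
noncomputable def wDepth {ι : Type*} (r : ι → ι → Prop) (u : ι) : ℕ :=
  sSup {m | ∃ l : List ι, l.Chain' (fun x y => r x y ∧ x ≠ y) ∧
    l.getLast? = some u ∧ l.length = m}

lemma WLe.le {S : Type*} {comm : S → S → Prop} {w : List S} {i j : Fin w.length}
    (h : WLe comm w i j) : i ≤ j := by
  induction h with
  | single h => exact h.1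
  | tail _ h ih => exact le_trans ih h.1

lemma wle_chain_bounded {S : Type*} {comm : S → S → Prop} {w : List S} {u : Fin w.length}
    {m : ℕ} (hm : m ∈ {m | ∃ l : List (Fin w.length),
      l.Chain' (fun x y => WLe comm w x y ∧ x ≠ y) ∧ l.getLast? = some u ∧ l.length = m}) :
    m ≤ w.length := by
  obtain ⟨l, hc, _, hlen⟩ := hm
  have hc' : l.Chain' (· < ·) := hc.imp (fun _ _ h => lt_of_le_of_ne (WLe.le h.1) h.2)
  have hnd : l.Nodup := (List.isChain_iff_pairwise.mp hc').nodup
  calc m = l.length := hlen.symm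
    _ ≤ Fintype.card (Fin w.length) := hnd.length_le_card
    _ = w.length := Fintype.card_fin _

lemma wDepth_lt {S : Type*} {comm : S → S → Prop} {w : List S} {i j : Fin w.length}
    (h : WLe comm w i j) (hne : i ≠ j) :
    wDepth (WLe comm w) i < wDepth (WLe comm w) j := by
  set Si := {m | ∃ l : List (Fin w.length),
    l.Chain' (fun x y => WLe comm w x y ∧ x ≠ y) ∧ l.getLast? = some i ∧ l.length = m}
  have hiS : Si.Nonempty := ⟨1, [i], List.isChain_singleton i, rfl, rfl⟩
  have hbdd : BddAbove Si := ⟨w.length, fun m hm => wle_chain_bounded hm⟩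
  have hmem : sSup Si ∈ Si := Nat.sSup_mem hiS hbdd
  obtain ⟨l, hc, hlast, hlen⟩ := hmem
  have hlne : l ≠ [] := by rintro rfl; simp at hlast
  have hc2 : (l ++ [j]).Chain' (fun x y => WLe comm w x y ∧ x ≠ y) := by
    rw [List.Chain', List.isChain_append]
    refine ⟨hc, List.isChain_singleton j, ?_⟩
    intro x hx y hy
    simp only [List.head?_cons, Option.mem_some_iff] at hy
    rw [hlast] at hx
    simp only [Option.mem_some_iff] at hx
    subst hx; subst hy
    exact ⟨h, hne⟩
  have hmem2 : sSup Si + 1 ∈ {m | ∃ l : List (Fin w.length),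
      l.Chain' (fun x y => WLe comm w x y ∧ x ≠ y) ∧ l.getLast? = some j ∧ l.length = m} :=
    ⟨l ++ [j], hc2, by simp, by simp [hlen]⟩
  have : sSup Si + 1 ≤ wDepth (WLe comm w) j :=
    le_csSup ⟨w.length, fun m hm => wle_chain_bounded hm⟩ hmem2
  exact lt_of_lt_of_le (Nat.lt_succ_self (sSup Si)) this

/-- In a reduced word poset, positions with the same depth (i.e., the sets
`φ_P⁻¹(λ_P⁻¹({k}))`) are pairwise incomparable, with distinct, commuting labels;
in particular they give an independent subset of `S` of the same cardinality. -/
theorem same_depth_incomparable_independent {B W : Type*} [Group W]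
    {M : CoxeterMatrix B} (cs : CoxeterSystem M W)
    (ω : List B) (hred : cs.IsReduced ω) (i j : Fin ω.length) (hij : i ≠ j)
    (hdp : wDepth (WLe (fun a b => M a b = 2) ω) i
         = wDepth (WLe (fun a b => M a b = 2) ω) j) :
    (¬ WLe (fun a b => M a b = 2) ω i j ∧ ¬ WLe (fun a b => M a b = 2) ω j i) ∧
    ω.get i ≠ ω.get j ∧ M (ω.get i) (ω.get j) = 2 := by
  have hnij : ¬ WLe (fun a b => M a b = 2) ω i j := fun h =>
    absurd hdp (wDepth_lt h hij).ne
  have hnji : ¬ WLe (fun a b => M a b = 2) ω j i := fun h =>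
    absurd hdp.symm (wDepth_lt h hij.symm).ne
  refine ⟨⟨hnij, hnji⟩, ?_⟩
  rcases lt_or_gt_of_ne hij with hlt | hlt
  · have : ¬ WStep (fun a b => M a b = 2) ω i j := fun h => hnij (Relation.TransGen.single h)
    rw [WStep] at this
    push_neg at this
    obtain ⟨hne, hcomm⟩ := this hlt.le
    exact ⟨hne, hcomm⟩
  · have : ¬ WStep (fun a b => M a b = 2) ω j i := fun h => hnji (Relation.TransGen.single h)
    rw [WStep] at this
    push_neg at this
    obtain ⟨hne, hcomm⟩ := this hlt.le
    exact ⟨hne.symm, (M.symmetric _ _).trans hcomm⟩
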